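/- (Aizerman–Malishevski decomposition) Every path-independent choice function C on a finite set W with the property that C(S) ≠ ∅ for every nonempty S can be written as C(S) = ⋃_{j ∈ J} max_S P_j for some finite family {P_j}_{j∈J} of linear orders on W. -/

import Mathlib

section AMaux

variable {W : Type*} [DecidableEq W] [Fintype W]

/-- A greedy enumeration of `R` with respect to the choice function `C`:
the head is chosen from `R`, and the tail is a greedy enumeration of the rest. -/
inductive AMGreedy (C : Finset W → Finset W) : Finset W → List W → Prop
  | nil : AMGreedy C ∅ []
  | cons {R : Finset W} {a : W} {l : List W} :
      a ∈ C R → AMGreedy C (R.erase a) l → AMGreedy C R (a :: l)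

variable {C : Finset W → Finset W}

lemma AMGreedy.toFinset_eq (hsub : ∀ S : Finset W, C S ⊆ S) :
    ∀ {R : Finset W} {l : List W}, AMGreedy C R l → l.toFinset = R := by
  intro R l h
  induction h with
  | nil => simp
  | @cons R a l ha _ ih =>
      have haR : a ∈ R := hsub R ha
      simp [ih, Finset.insert_erase haR]

lemma AMGreedy.nodup (hsub : ∀ S : Finset W, C S ⊆ S) :
    ∀ {R : Finset W} {l : List W}, AMGreedy C R l → l.Nodup := by
  intro R l h
  induction h with
  | nil => simp
  | @cons R a l ha hg ih =>
      refine List.nodup_cons.2 ⟨?_, ih⟩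
      intro hal
      have := hg.toFinset_eq hsub
      have : a ∈ R.erase a := by
        rw [← this]; exact List.mem_toFinset.2 hal
      simp at this

lemma AMGreedy.suffix (hsub : ∀ S : Finset W, C S ⊆ S) :
    ∀ {R : Finset W} {l l' : List W}, AMGreedy C R l → l' <:+ l →
      AMGreedy C l'.toFinset l' := by
  intro R l l' h
  induction h generalizing l' with
  | nil =>
      intro hs
      have : l' = [] := List.suffix_nil.mp hs
      subst this; simpa using AMGreedy.nil
  | @cons R a l ha hg ih =>
      intro hs
      rcases List.suffix_cons_iff.mp hs with h1 | h2
      · subst h1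
        have ht : (a :: l).toFinset = R := (AMGreedy.cons ha hg).toFinset_eq hsub
        rw [ht]; exact AMGreedy.cons ha hg
      · exact ih h2

lemma AMGreedy.head_mem {R : Finset W} {a : W} {l : List W}
    (h : AMGreedy C R (a :: l)) : a ∈ C R := by
  cases h with
  | cons ha _ => exact ha

lemma AMGreedy.exists_greedy (hsub : ∀ S : Finset W, C S ⊆ S)
    (hne : ∀ S : Finset W, S.Nonempty → (C S).Nonempty) :
    ∀ R : Finset W, ∃ l : List W, AMGreedy C R l := by
  intro R
  induction R using Finset.strongInduction with
  | _ R ih =>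
      rcases R.eq_empty_or_nonempty with rfl | hR
      · exact ⟨[], AMGreedy.nil⟩
      · obtain ⟨a, ha⟩ := hne R hR
        have haR : a ∈ R := hsub R ha
        obtain ⟨l, hl⟩ := ih (R.erase a) (Finset.erase_ssubset haR)
        exact ⟨a :: l, AMGreedy.cons ha hl⟩

end AMaux

section AMmain

variable {W : Type*} [DecidableEq W] [Fintype W]
variable {C : Finset W → Finset W}

/-- Chernoff / Sen's α: follows from path independence. -/
lemma AM_chernoff (hsub : ∀ S : Finset W, C S ⊆ S)
    (hpi : ∀ S T : Finset W, C (S ∪ T) = C (C S ∪ T))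
    {S R : Finset W} {w : W} (hSR : S ⊆ R) (hw : w ∈ C R) (hwS : w ∈ S) :
    w ∈ C S := by
  have hU : S ∪ (R \ S) = R := Finset.union_sdiff_of_subset hSR
  have h1 : C R = C (C S ∪ (R \ S)) := by
    calc C R = C (S ∪ (R \ S)) := by rw [hU]
    _ = C (C S ∪ (R \ S)) := hpi _ _
  have h2 : w ∈ C S ∪ (R \ S) := (hsub _) (h1 ▸ hw)
  rcases Finset.mem_union.1 h2 with h | h
  · exact h
  · exact absurd (Finset.mem_sdiff.1 h).2 (by simp [hwS])

/-- If `C R ⊆ S ⊆ R` then `C R = C S`. -/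
lemma AM_eq_of_between (hpi : ∀ S T : Finset W, C (S ∪ T) = C (C S ∪ T))
    {S R : Finset W} (hSR : S ⊆ R) (hCR : C R ⊆ S) : C R = C S := by
  have := hpi R S
  rwa [Finset.union_eq_left.2 hSR, Finset.union_eq_right.2 hCR] at this

/-- Given `w ∈ C S` and `S ⊆ R`, there is a greedy enumeration of `R` in which `w`
appears before every other element of `S`. -/
lemma AM_exists_greedy_top (hsub : ∀ S : Finset W, C S ⊆ S)
    (hne : ∀ S : Finset W, S.Nonempty → (C S).Nonempty)
    (hpi : ∀ S T : Finset W, C (S ∪ T) = C (C S ∪ T)) :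
    ∀ R S : Finset W, ∀ w : W, S ⊆ R → w ∈ C S →
      ∃ l₁ l₂ : List W, AMGreedy C R (l₁ ++ w :: l₂) ∧ ∀ x ∈ S, x = w ∨ x ∈ l₂ := by
  intro R
  induction R using Finset.strongInduction with
  | _ R ih =>
      intro S w hSR hw
      have hwS : w ∈ S := hsub S hw
      by_cases hwR : w ∈ C R
      · obtain ⟨l, hl⟩ := AMGreedy.exists_greedy hsub hne (R.erase w)
        refine ⟨[], l, by simpa using AMGreedy.cons hwR hl, ?_⟩
        intro x hx
        by_cases hxw : x = w
        · exact Or.inl hxw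
        · refine Or.inr ?_
          have : x ∈ R.erase w := Finset.mem_erase.2 ⟨hxw, hSR hx⟩
          rw [← hl.toFinset_eq hsub] at this
          exact List.mem_toFinset.1 this
      · have hnsub : ¬ C R ⊆ S := by
          intro hs
          exact hwR ((AM_eq_of_between hpi hSR hs) ▸ hw)
        obtain ⟨a, haC, haS⟩ := Finset.not_subset.1 hnsub
        have haR : a ∈ R := hsub R haC
        have hSR' : S ⊆ R.erase a := fun x hx =>
          Finset.mem_erase.2 ⟨fun h => haS (h ▸ hx), hSR hx⟩
        obtain ⟨l₁, l₂, hg, hmem⟩ :=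
          ih (R.erase a) (Finset.erase_ssubset haR) S w hSR' hw
        exact ⟨a :: l₁, l₂, AMGreedy.cons haC hg, hmem⟩

/-- From a greedy enumeration of `univ`, extract the rank function into `Fin (card W)`. -/
lemma AM_rank {l : List W} (hsub : ∀ S : Finset W, C S ⊆ S)
    (hl : AMGreedy C Finset.univ l) :
    ∃ f : W → Fin (Fintype.card W),
      Function.Injective f ∧
      (∀ w, w ∈ C (Finset.univ.filter fun x => f x ≤ f w)) ∧
      (∀ x w : W, f x ≤ f w ↔ l.idxOf w ≤ l.idxOf x) := by
  have hnd : l.Nodup := hl.nodup hsub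
  have htf : l.toFinset = Finset.univ := hl.toFinset_eq hsub
  have hmem : ∀ x : W, x ∈ l := fun x => List.mem_toFinset.1 (htf ▸ Finset.mem_univ x)
  have hlen : l.length = Fintype.card W := by
    rw [← List.toFinset_card_of_nodup hnd, htf, Finset.card_univ]
  have hidx : ∀ x : W, l.idxOf x < Fintype.card W := fun x =>
    hlen ▸ List.idxOf_lt_length_iff.2 (hmem x)
  set f : W → Fin (Fintype.card W) := fun w => Fin.rev ⟨l.idxOf w, hidx w⟩ with hf
  have hle : ∀ x w : W, f x ≤ f w ↔ l.idxOf w ≤ l.idxOf x := by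
    intro x w
    simp only [hf, Fin.rev_le_rev, Fin.mk_le_mk]
  have hinj : Function.Injective f := by
    intro x y hxy
    have := Fin.rev_injective hxy
    have hidxeq : l.idxOf x = l.idxOf y := congrArg Fin.val this
    exact (List.idxOf_inj (hmem x)).1 hidxeq
  refine ⟨f, hinj, ?_, hle⟩
  intro w
  -- the filter set is the toFinset of the suffix of `l` starting at `w`
  have hdropmem : ∀ x : W, x ∈ l.drop (l.idxOf w) ↔ l.idxOf w ≤ l.idxOf x := by
    intro x
    constructor
    · intro hx
      by_contra hlt
      push_neg at hlt
      have hxtake : x ∈ l.take (l.idxOf w) := by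
        have h1 : l.idxOf x < (l.take (l.idxOf w)).length := by
          rw [List.length_take]
          exact lt_min hlt (List.idxOf_lt_length_iff.2 (hmem x))
        have : (l.take (l.idxOf w))[l.idxOf x]'h1 = x := by
          rw [List.getElem_take]
          exact List.getElem_idxOf (List.idxOf_lt_length_iff.2 (hmem x))
        exact this ▸ List.getElem_mem h1
      exact (List.disjoint_take_drop hnd le_rfl) hxtake hx
    · intro hge
      have hxl : l.idxOf x < l.length := List.idxOf_lt_length_iff.2 (hmem x)
      have h1 : l.idxOf x - l.idxOf w < (l.drop (l.idxOf w)).length := by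
        rw [List.length_drop]
        omega
      have : (l.drop (l.idxOf w))[l.idxOf x - l.idxOf w]'h1 = x := by
        rw [List.getElem_drop]
        have : l.idxOf w + (l.idxOf x - l.idxOf w) = l.idxOf x := by omega
        simp_rw [this]
        exact List.getElem_idxOf hxl
      exact this ▸ List.getElem_mem h1
  have hset : (Finset.univ.filter fun x => f x ≤ f w) = (l.drop (l.idxOf w)).toFinset := by
    ext x
    simp only [Finset.mem_filter, Finset.mem_univ, true_and, List.mem_toFinset,
      hdropmem x, hle x w]
  rw [hset]
  have hwlen : l.idxOf w < l.length := List.idxOf_lt_length_iff.2 (hmem w)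
  have hdrop : l.drop (l.idxOf w) = w :: l.drop (l.idxOf w + 1) := by
    rw [List.drop_eq_getElem_cons hwlen, List.getElem_idxOf hwlen]
  have hgsuf : AMGreedy C (l.drop (l.idxOf w)).toFinset (l.drop (l.idxOf w)) :=
    hl.suffix hsub (List.drop_suffix _ _)
  rw [hdrop] at hgsuf
  rw [hdrop]
  exact hgsuf.head_mem

end AMmain

/-- Aizerman–Malishevski decomposition: every path-independent
choice function on a finite set `W` that chooses something from every nonempty
set is the union of the maximizers of a finite family of linear orders. -/
theorem aizerman_malishevski_decomposition
    {W : Type*} [DecidableEq W] [Fintype W]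
    (C : Finset W → Finset W)
    (hsub : ∀ S : Finset W, C S ⊆ S)
    (hne : ∀ S : Finset W, S.Nonempty → (C S).Nonempty)
    (hpi : ∀ S T : Finset W, C (S ∪ T) = C (C S ∪ T)) :
    ∃ (J : Type) (_ : Fintype J) (_ : Nonempty J) (P : J → LinearOrder W),
      ∀ (S : Finset W) (w : W),
        w ∈ C S ↔ w ∈ S ∧ ∃ j : J, ∀ x ∈ S, (P j).le x w := by
  classical
  set n := Fintype.card W
  let Good : (W → Fin n) → Prop := fun f =>
    Function.Injective f ∧ ∀ w, w ∈ C (Finset.univ.filter fun x => f x ≤ f w)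
  let J0 := {f : W → Fin n // Good f}
  haveI : Fintype J0 := Fintype.ofFinite J0
  have hJ0 : Nonempty J0 := by
    obtain ⟨l, hl⟩ := AMGreedy.exists_greedy hsub hne Finset.univ
    obtain ⟨f, hinj, hgr, _⟩ := AM_rank hsub hl
    exact ⟨⟨f, hinj, hgr⟩⟩
  haveI := hJ0
  let e : Fin (Fintype.card J0) ≃ J0 := (Fintype.equivFin J0).symm
  let P : Fin (Fintype.card J0) → LinearOrder W :=
    fun i => LinearOrder.lift' (e i).1 (e i).2.1
  have hle : ∀ (i : Fin (Fintype.card J0)) (x y : W),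
      (P i).le x y ↔ (e i).1 x ≤ (e i).1 y := fun _ _ _ => Iff.rfl
  refine ⟨Fin (Fintype.card J0), inferInstance,
    ⟨⟨0, Fintype.card_pos⟩⟩, P, ?_⟩
  intro S w
  constructor
  · intro hw
    have hwS : w ∈ S := hsub S hw
    obtain ⟨l₁, l₂, hg, hmem⟩ :=
      AM_exists_greedy_top hsub hne hpi Finset.univ S w (Finset.subset_univ S) hw
    obtain ⟨f, hinj, hgr, hlef⟩ := AM_rank hsub hg
    let j0 : J0 := ⟨f, hinj, hgr⟩
    refine ⟨hwS, e.symm j0, ?_⟩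
    intro x hx
    rw [hle, Equiv.apply_symm_apply]
    show f x ≤ f w
    rw [hlef]
    have hnd : (l₁ ++ w :: l₂).Nodup := hg.nodup hsub
    have hwl1 : w ∉ l₁ := by
      have := List.disjoint_of_nodup_append hnd
      intro hc
      exact this hc (List.mem_cons_self)
    have hiw : (l₁ ++ w :: l₂).idxOf w = l₁.length := by
      rw [List.idxOf_append_of_notMem hwl1]
      simp
    rcases hmem x hx with rfl | hxl2
    · exact le_rfl
    · have hxl1 : x ∉ l₁ := by
        have := List.disjoint_of_nodup_append hnd
        intro hc
        exact this hc (List.mem_cons_of_mem w hxl2)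
      have hxw : x ≠ w := by
        rintro rfl
        have := (List.nodup_append.1 hnd).2.1
        exact (List.nodup_cons.1 this).1 hxl2
      have hix : (l₁ ++ w :: l₂).idxOf x = l₁.length + (w :: l₂).idxOf x := by
        rw [List.idxOf_append_of_notMem hxl1]
      rw [hiw, hix]
      omega
  · rintro ⟨hwS, j, hmax⟩
    have hwR : w ∈ C (Finset.univ.filter fun x => (e j).1 x ≤ (e j).1 w) := (e j).2.2 w
    refine AM_chernoff hsub hpi ?_ hwR hwS
    intro x hx
    refine Finset.mem_filter.2 ⟨Finset.mem_univ x, ?_⟩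
    exact (hle j x w).1 (hmax x hx)
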